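/- Let x be a random vector in ℝ^p with E[x] = 0, finite covariance matrix Σ_x, finite fourth moments, and bounded fourth moments with constant C̃₄, and let Φ : ℝ → ℝ be twice differentiable with ‖Φ''‖_∞ ≤ M̄_{Φ,2}. Fix θ ∈ ℝ^p and let Y = Φ''(xᵀθ) x xᵀ ∈ ℝ^{p×p}. Then the trace of the covariance of the entries of Y satisfies E[‖Y − E[Y]‖_F²] ≤ E[‖Y‖_F²] ≤ M̄_{Φ,2}² · C̃₄ · p² · ‖Σ_x‖₂². -/

import Mathlib

open MeasureTheory
open scoped RealInnerProductSpace

/-- bound on the trace of the covariance of the flattened per-sample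
GLM Hessian `Y = Φ''(xᵀθ) x xᵀ`, i.e. on `E[‖Y − E[Y]‖_F²] ≤ E[‖Y‖_F²]`,
where `‖·‖_F` is the Frobenius norm (written entrywise). -/
theorem glm_flattened_hessian_trace_cov_bound {p : ℕ} {Ω : Type*} [MeasurableSpace Ω]
    (μ : Measure Ω) [IsProbabilityMeasure μ]
    (x : Ω → EuclideanSpace ℝ (Fin p)) (hx : Measurable x)
    (C4 M2 : ℝ) (hC4 : 0 < C4)
    (hmean : ∫ ω, x ω ∂μ = 0)
    (hxint : Integrable (fun ω => ‖x ω‖ ^ 4) μ)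
    (covX : EuclideanSpace ℝ (Fin p) →L[ℝ] EuclideanSpace ℝ (Fin p))
    (hcov : ∀ v : EuclideanSpace ℝ (Fin p), (∫ ω, ⟪x ω, v⟫ ^ 2 ∂μ) = ⟪covX v, v⟫)
    (h4 : ∀ v : EuclideanSpace ℝ (Fin p), ‖v‖ = 1 →
      (∫ ω, ⟪x ω, v⟫ ^ 4 ∂μ) ≤ C4 * (∫ ω, ⟪x ω, v⟫ ^ 2 ∂μ) ^ 2)
    (Φ : ℝ → ℝ) (hΦ : ContDiff ℝ 2 Φ)
    (hM2 : ∀ u : ℝ, |deriv (deriv Φ) u| ≤ M2)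
    (θ : EuclideanSpace ℝ (Fin p))
    (Y : Ω → Matrix (Fin p) (Fin p) ℝ)
    (hY : ∀ ω i j, Y ω i j = deriv (deriv Φ) ⟪x ω, θ⟫ * x ω i * x ω j) :
    (∫ ω, ∑ i, ∑ j, (Y ω i j - ∫ ω', Y ω' i j ∂μ) ^ 2 ∂μ)
      ≤ (∫ ω, ∑ i, ∑ j, (Y ω i j) ^ 2 ∂μ) ∧
    (∫ ω, ∑ i, ∑ j, (Y ω i j) ^ 2 ∂μ) ≤ M2 ^ 2 * C4 * (p : ℝ) ^ 2 * ‖covX‖ ^ 2 := by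
  set f := deriv (deriv Φ) with hfdef
  have hM2' : (0 : ℝ) ≤ M2 := le_trans (abs_nonneg _) (hM2 0)
  -- continuity / measurability
  have hfc : Continuous f := by
    have h2 : ContDiff ℝ (1 + 1 : WithTop ℕ∞) Φ := by norm_num; exact hΦ
    exact (contDiff_one_iff_deriv.mp (contDiff_succ_iff_deriv.mp h2).2.2).2
  have hxm : ∀ i, Measurable fun ω => x ω i := fun i =>
    ((EuclideanSpace.proj i).continuous.measurable).comp hx
  have hinnm : Measurable fun ω => ⟪x ω, θ⟫ :=
    ((continuous_id.inner continuous_const).measurable).comp hx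
  have hYm : ∀ i j, Measurable fun ω => Y ω i j := by
    intro i j
    have : (fun ω => Y ω i j) = fun ω => f ⟪x ω, θ⟫ * x ω i * x ω j := by
      funext ω; exact hY ω i j
    rw [this]
    exact ((hfc.measurable.comp hinnm).mul (hxm i)).mul (hxm j)
  -- coordinate bound
  have hcoord : ∀ (v : EuclideanSpace ℝ (Fin p)) i, |v i| ≤ ‖v‖ := by
    intro v i
    have h := abs_real_inner_le_norm v (EuclideanSpace.single i (1:ℝ))
    rw [EuclideanSpace.inner_single_right] at h
    simpa using h
  -- pointwise bounds
  have hYle : ∀ ω i j, |Y ω i j| ≤ M2 * ‖x ω‖ ^ 2 := by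
    intro ω i j
    rw [hY]
    have h1 := hcoord (x ω) i
    have h2 := hcoord (x ω) j
    have h3 := hM2 ⟪x ω, θ⟫
    have h5 := abs_nonneg (x ω i)
    have h6 := abs_nonneg (x ω j)
    calc |f ⟪x ω, θ⟫ * x ω i * x ω j| = |f ⟪x ω, θ⟫| * |x ω i| * |x ω j| := by
          rw [abs_mul, abs_mul]
      _ ≤ M2 * ‖x ω‖ * ‖x ω‖ := by
          apply mul_le_mul _ h2 h6 (by positivity)
          exact mul_le_mul h3 h1 h5 hM2'
      _ = M2 * ‖x ω‖ ^ 2 := by ring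
  have hYsqle : ∀ ω i j, (Y ω i j) ^ 2 ≤ M2 ^ 2 * ‖x ω‖ ^ 4 := by
    intro ω i j
    have h := hYle ω i j
    have h0 := abs_nonneg (Y ω i j)
    nlinarith [norm_nonneg (x ω), sq_abs (Y ω i j)]
  -- integrability
  have hBint : Integrable (fun ω => M2 ^ 2 * ‖x ω‖ ^ 4) μ := hxint.const_mul _
  have hYsqint : ∀ i j, Integrable (fun ω => (Y ω i j) ^ 2) μ := by
    intro i j
    refine hBint.mono' (((hYm i j).pow_const 2).aestronglyMeasurable) ?_
    filter_upwards with ω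
    rw [Real.norm_eq_abs, abs_of_nonneg (sq_nonneg _)]
    exact hYsqle ω i j
  have hx2int : Integrable (fun ω => ‖x ω‖ ^ 2) μ := by
    refine (hxint.add (integrable_const 1)).mono'
      ((hx.norm.pow_const 2).aestronglyMeasurable) ?_
    filter_upwards with ω
    rw [Real.norm_eq_abs, abs_of_nonneg (by positivity)]
    simp only [Pi.add_apply]
    nlinarith [norm_nonneg (x ω), sq_nonneg (‖x ω‖ ^ 2 - 1)]
  have hYint : ∀ i j, Integrable (fun ω => Y ω i j) μ := by
    intro i j
    refine (hx2int.const_mul M2).mono' ((hYm i j).aestronglyMeasurable) ?_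
    filter_upwards with ω
    rw [Real.norm_eq_abs]
    exact hYle ω i j
  have hdint : ∀ i j, Integrable (fun ω => (Y ω i j - ∫ ω', Y ω' i j ∂μ) ^ 2) μ := by
    intro i j
    set c := ∫ ω', Y ω' i j ∂μ
    have he : (fun ω => (Y ω i j - c) ^ 2)
        = fun ω => (Y ω i j) ^ 2 - (2 * c) * Y ω i j + c ^ 2 := by
      funext ω; ring
    rw [he]
    exact ((hYsqint i j).sub ((hYint i j).const_mul _)).add (integrable_const _)
  -- variance ≤ second moment, per entry
  have key : ∀ i j, (∫ ω, (Y ω i j - ∫ ω', Y ω' i j ∂μ) ^ 2 ∂μ)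
      ≤ ∫ ω, (Y ω i j) ^ 2 ∂μ := by
    intro i j
    set c := ∫ ω', Y ω' i j ∂μ with hc
    have h1 : Integrable (fun ω => (Y ω i j) ^ 2 - (2 * c) * Y ω i j) μ :=
      (hYsqint i j).sub ((hYint i j).const_mul _)
    calc ∫ ω, (Y ω i j - c) ^ 2 ∂μ
        = ∫ ω, ((Y ω i j) ^ 2 - (2 * c) * Y ω i j + c ^ 2) ∂μ := by
          apply integral_congr_ae
          filter_upwards with ω
          ring
      _ = (∫ ω, ((Y ω i j) ^ 2 - (2 * c) * Y ω i j) ∂μ) + ∫ _ω, c ^ 2 ∂μ :=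
          integral_add h1 (integrable_const _)
      _ = ((∫ ω, (Y ω i j) ^ 2 ∂μ) - ∫ ω, (2 * c) * Y ω i j ∂μ) + c ^ 2 := by
          rw [integral_sub (hYsqint i j) ((hYint i j).const_mul _), integral_const]
          simp
      _ = (∫ ω, (Y ω i j) ^ 2 ∂μ) - (2 * c) * c + c ^ 2 := by
          rw [integral_const_mul, ← hc]
      _ ≤ ∫ ω, (Y ω i j) ^ 2 ∂μ := by nlinarith [sq_nonneg c]
  -- swap integral and sums
  have hswap : ∀ (A : Fin p → Fin p → Ω → ℝ),
      (∀ i j, Integrable (A i j) μ) →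
      (∫ ω, ∑ i, ∑ j, A i j ω ∂μ) = ∑ i, ∑ j, ∫ ω, A i j ω ∂μ := by
    intro A hA
    rw [integral_finset_sum _ (fun i _ => integrable_finset_sum _ fun j _ => hA i j)]
    exact Finset.sum_congr rfl fun i _ => integral_finset_sum _ fun j _ => hA i j
  have e1 := hswap (fun i j ω => (Y ω i j - ∫ ω', Y ω' i j ∂μ) ^ 2) hdint
  have e2 := hswap (fun i j ω => (Y ω i j) ^ 2) hYsqint
  constructor
  · rw [e1, e2]
    exact Finset.sum_le_sum fun i _ => Finset.sum_le_sum fun j _ => key i j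
  -- second moment bound
  · have hx4i : ∀ i, Integrable (fun ω => (x ω i) ^ 4) μ := by
      intro i
      refine hxint.mono' (((hxm i).pow_const 4).aestronglyMeasurable) ?_
      filter_upwards with ω
      rw [Real.norm_eq_abs, abs_of_nonneg (by positivity)]
      have h2 : (x ω i) ^ 2 ≤ ‖x ω‖ ^ 2 := by
        nlinarith [hcoord (x ω) i, abs_nonneg (x ω i), sq_abs (x ω i), norm_nonneg (x ω)]
      calc (x ω i) ^ 4 = ((x ω i) ^ 2) ^ 2 := by ring
        _ ≤ (‖x ω‖ ^ 2) ^ 2 := pow_le_pow_left₀ (sq_nonneg _) h2 2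
        _ = ‖x ω‖ ^ 4 := by ring
    have hxi4 : ∀ i, (∫ ω, (x ω i) ^ 4 ∂μ) ≤ C4 * ‖covX‖ ^ 2 := by
      intro i
      set e : EuclideanSpace ℝ (Fin p) := EuclideanSpace.single i (1:ℝ) with he
      have hne : ‖e‖ = 1 := by simp [he]
      have hie : ∀ v : EuclideanSpace ℝ (Fin p), ⟪v, e⟫ = v i := by
        intro v; rw [he, EuclideanSpace.inner_single_right]; simp
      have h4' := h4 e hne
      rw [hcov e] at h4'
      have heq4 : (∫ ω, ⟪x ω, e⟫ ^ 4 ∂μ) = ∫ ω, (x ω i) ^ 4 ∂μ := by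
        refine integral_congr_ae (Filter.Eventually.of_forall fun ω => ?_)
        simp only [hie]
      rw [heq4] at h4'
      have hb : |⟪covX e, e⟫| ≤ ‖covX‖ := by
        calc |⟪covX e, e⟫| ≤ ‖covX e‖ * ‖e‖ := abs_real_inner_le_norm _ _
          _ ≤ (‖covX‖ * ‖e‖) * ‖e‖ :=
              mul_le_mul_of_nonneg_right (covX.le_opNorm e) (norm_nonneg _)
          _ = ‖covX‖ := by rw [hne]; ring
      have hsq : ⟪covX e, e⟫ ^ 2 ≤ ‖covX‖ ^ 2 := by
        nlinarith [abs_nonneg ⟪covX e, e⟫, sq_abs ⟪covX e, e⟫, norm_nonneg covX]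
      exact h4'.trans (mul_le_mul_of_nonneg_left hsq hC4.le)
    have hpt : ∀ ω, ∑ i, ∑ j, (Y ω i j) ^ 2
        ≤ (M2 ^ 2 * (p : ℝ)) * ∑ i, (x ω i) ^ 4 := by
      intro ω
      have h1 : ∀ i j, (Y ω i j) ^ 2
          = (f ⟪x ω, θ⟫) ^ 2 * ((x ω i) ^ 2 * (x ω j) ^ 2) := by
        intro i j; rw [hY]; ring
      have hsum : ∑ i, ∑ j, (Y ω i j) ^ 2
          = (f ⟪x ω, θ⟫) ^ 2 * (∑ i, (x ω i) ^ 2) ^ 2 := by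
        simp_rw [h1, ← Finset.mul_sum]
        rw [← Finset.sum_mul]; ring
      rw [hsum]
      have hfb : (f ⟪x ω, θ⟫) ^ 2 ≤ M2 ^ 2 := by
        nlinarith [hM2 ⟪x ω, θ⟫, abs_nonneg (f ⟪x ω, θ⟫), sq_abs (f ⟪x ω, θ⟫)]
      have hcs : (∑ i, (x ω i) ^ 2) ^ 2 ≤ (p : ℝ) * ∑ i, (x ω i) ^ 4 := by
        have := sq_sum_le_card_mul_sum_sq (s := (Finset.univ : Finset (Fin p)))
          (f := fun i => (x ω i) ^ 2)
        simpa [Finset.card_univ, ← pow_mul] using this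
      have hnn : (0:ℝ) ≤ (∑ i, (x ω i) ^ 2) ^ 2 := sq_nonneg _
      calc (f ⟪x ω, θ⟫) ^ 2 * (∑ i, (x ω i) ^ 2) ^ 2
          ≤ M2 ^ 2 * ((p : ℝ) * ∑ i, (x ω i) ^ 4) :=
            mul_le_mul hfb hcs hnn (by positivity)
        _ = (M2 ^ 2 * (p : ℝ)) * ∑ i, (x ω i) ^ 4 := by ring
    calc (∫ ω, ∑ i, ∑ j, (Y ω i j) ^ 2 ∂μ)
        ≤ ∫ ω, (M2 ^ 2 * (p : ℝ)) * ∑ i, (x ω i) ^ 4 ∂μ := by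
          refine integral_mono
            (integrable_finset_sum _ fun i _ => integrable_finset_sum _ fun j _ => hYsqint i j)
            ((integrable_finset_sum _ fun i _ => hx4i i).const_mul _) hpt
      _ = (M2 ^ 2 * (p : ℝ)) * ∑ i, ∫ ω, (x ω i) ^ 4 ∂μ := by
          rw [integral_const_mul, integral_finset_sum _ fun i _ => hx4i i]
      _ ≤ (M2 ^ 2 * (p : ℝ)) * ∑ _i : Fin p, (C4 * ‖covX‖ ^ 2) :=
          mul_le_mul_of_nonneg_left (Finset.sum_le_sum fun i _ => hxi4 i) (by positivity)
      _ = M2 ^ 2 * C4 * (p : ℝ) ^ 2 * ‖covX‖ ^ 2 := by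
          simp only [Finset.sum_const, Finset.card_univ, Fintype.card_fin, nsmul_eq_mul]
          ring
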